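/- Let n ∈ ℕ, Γ a subgroup of the permutations of Fin n, and Fβ ⊆ (Fin n → ℝ). Let (Fω)_{ω ∈ C} be a family of subsets of Fin n → ℝ indexed by a type C, pairwise disjoint, with union equal to Fβ. Let mβ, mω ∈ ℕ with mβ ≤ mω ≤ n; let πβ, πω be permutations of Fin n with (πβ • z) k = (πω • z) k for all z : Fin n → ℝ and all k < mβ; let φβ ∈ Γ and ψ ∈ Γ with ψ • Fβ = Fβ, and set φω = φβ * ψ (so φω • x = φβ • (ψ • x)). Define σβ(x) = (πβ • (φβ • x))|mβ and σω(x) = (πω • (φω • x))|mω. Assume: for every x ∈ Fβ and ξ ∈ Γ with σβ(x) = σβ(ξ • x), also ξ • x ∈ Fβ; and for every ω ∈ C, x ∈ Fω and ξ ∈ Γ with σω(x) = σω(ξ • x), also ξ • x ∈ Fω. Then for every x̃ ∈ Fβ satisfying σβ(x̃) ⪰ σβ(γ • x̃) for all γ ∈ Γ, there is exactly one ω ∈ C for which there exists ξ ∈ Γ with ξ • x̃ ∈ Fω and σω(ξ • x̃) ⪰ σω(γ • (ξ • x̃)) for all γ ∈ Γ. -/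

import Mathlib

/-- Action of a permutation of `Fin n` on vectors `x : Fin n → ℝ`:
`(γ • x) i = x (γ⁻¹ i)`. -/
def pact {n : ℕ} (γ : Equiv.Perm (Fin n)) (x : Fin n → ℝ) : Fin n → ℝ :=
  fun i => x (γ⁻¹ i)

/-- Lexicographic order `u ⪰ v` on `Fin m → ℝ`. -/
def lexGe {m : ℕ} (u v : Fin m → ℝ) : Prop :=
  u = v ∨ ∃ k : Fin m, (∀ i : Fin m, i < k → u i = v i) ∧ v k < u k

/-- Restriction of `z : Fin n → ℝ` to its first `m` coordinates. -/
def restr {n : ℕ} (m : ℕ) (h : m ≤ n) (z : Fin n → ℝ) : Fin m → ℝ :=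
  fun k => z (Fin.castLE h k)

noncomputable instance lexLin (m : ℕ) : LinearOrder (Lex (Fin m → ℝ)) :=
  @Pi.Lex.linearOrder (Fin m) (fun _ => ℝ) Fin.instLinearOrder
    (inferInstance : WellFoundedLT (Fin m)) (fun _ => inferInstance)

lemma pact_mul {n : ℕ} (a b : Equiv.Perm (Fin n)) (x : Fin n → ℝ) :
    pact (a * b) x = pact a (pact b x) := by
  funext i; simp [pact]

lemma pact_one {n : ℕ} (x : Fin n → ℝ) : pact 1 x = x := rfl

lemma pact_inj {n : ℕ} (a : Equiv.Perm (Fin n)) {x y : Fin n → ℝ}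
    (h : pact a x = pact a y) : x = y := by
  funext i
  have := congrFun h (a i)
  simpa [pact] using this

lemma lexGe_iff {m : ℕ} (u v : Fin m → ℝ) : lexGe u v ↔ toLex v ≤ toLex u := by
  constructor
  · rintro (rfl | ⟨k, hk, hlt⟩)
    · exact le_refl _
    · exact le_of_lt ⟨k, fun j hj => (hk j hj).symm, hlt⟩
  · intro h
    rcases lt_or_eq_of_le h with h | h
    · obtain ⟨k, hk, hlt⟩ := h
      exact Or.inr ⟨k, fun i hi => (hk i hi).symm, hlt⟩
    · exact Or.inl (toLex.injective h).symm

lemma lexGe_antisymm {m : ℕ} {u v : Fin m → ℝ} (h : lexGe u v) (h' : lexGe v u) :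
    u = v :=
  toLex.injective (le_antisymm ((lexGe_iff v u).mp h') ((lexGe_iff u v).mp h))

lemma lexGe_prefix {a b : ℕ} (h : a ≤ b) {u v : Fin b → ℝ} (huv : lexGe u v) :
    lexGe (fun k : Fin a => u (Fin.castLE h k)) (fun k : Fin a => v (Fin.castLE h k)) := by
  rcases huv with heq | ⟨k, hk, hlt⟩
  · exact Or.inl (by rw [heq])
  · by_cases hkm : (k : ℕ) < a
    · refine Or.inr ⟨⟨(k : ℕ), hkm⟩, fun i hi => hk (Fin.castLE h i) ?_, ?_⟩
      · simpa [Fin.lt_def] using hi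
      · have hcast : Fin.castLE h (⟨(k : ℕ), hkm⟩ : Fin a) = k := by
          ext; rfl
        simpa only [hcast] using hlt
    · refine Or.inl (funext fun i => hk (Fin.castLE h i) ?_)
      simp only [Fin.lt_def, Fin.coe_castLE]
      exact lt_of_lt_of_le i.2 (le_of_not_gt hkm)

/-- The single-step lemma behind the paper's main theorem: if the children's
regions `Fω` partition the node's region `Fβ`, the symmetry prehandling data
of the node and its children are related as in (C1)–(C3), and (C4) holds at
the node and at all children, then every `xr ∈ Fβ` satisfying the node's
symmetry handling constraints has a symmetric counterpart, satisfying the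
children's symmetry handling constraints, in exactly one child. -/
theorem stmt4 (n : ℕ) (Γ : Subgroup (Equiv.Perm (Fin n)))
    (Fβ : Set (Fin n → ℝ)) (C : Type) (Fω : C → Set (Fin n → ℝ))
    (hdisj : ∀ ω ω' : C, ω ≠ ω' → Disjoint (Fω ω) (Fω ω'))
    (hunion : (⋃ ω : C, Fω ω) = Fβ)
    (mβ mω : ℕ) (h1 : mβ ≤ mω) (h2 : mω ≤ n)
    (πβ πω : Equiv.Perm (Fin n))
    (hπ : ∀ z : Fin n → ℝ, ∀ k : Fin n, (k : ℕ) < mβ → pact πβ z k = pact πω z k)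
    (φβ ψ : Equiv.Perm (Fin n)) (hφβ : φβ ∈ Γ) (hψ : ψ ∈ Γ)
    (hψF : pact ψ '' Fβ = Fβ)
    (φω : Equiv.Perm (Fin n)) (hφω : φω = φβ * ψ)
    (hC4β : ∀ x ∈ Fβ, ∀ ξ ∈ Γ,
      restr mβ (h1.trans h2) (pact πβ (pact φβ x)) =
        restr mβ (h1.trans h2) (pact πβ (pact φβ (pact ξ x))) →
      pact ξ x ∈ Fβ)
    (hC4ω : ∀ ω : C, ∀ x ∈ Fω ω, ∀ ξ ∈ Γ,
      restr mω h2 (pact πω (pact φω x)) =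
        restr mω h2 (pact πω (pact φω (pact ξ x))) →
      pact ξ x ∈ Fω ω) :
    ∀ xr ∈ Fβ,
      (∀ γ ∈ Γ,
        lexGe (restr mβ (h1.trans h2) (pact πβ (pact φβ xr)))
          (restr mβ (h1.trans h2) (pact πβ (pact φβ (pact γ xr))))) →
      ∃! ω : C, ∃ ξ ∈ Γ, pact ξ xr ∈ Fω ω ∧
        ∀ γ ∈ Γ,
          lexGe (restr mω h2 (pact πω (pact φω (pact ξ xr))))
            (restr mω h2 (pact πω (pact φω (pact γ (pact ξ xr))))) := by
  intro xr hxr hmax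
  -- abbreviations
  set σβ : (Fin n → ℝ) → (Fin mβ → ℝ) :=
    fun x => restr mβ (h1.trans h2) (pact πβ (pact φβ x)) with hσβ
  set σω : (Fin n → ℝ) → (Fin mω → ℝ) :=
    fun x => restr mω h2 (pact πω (pact φω x)) with hσω
  -- the prefix of σω x is σβ (ψ • x)
  have hpre : ∀ x : Fin n → ℝ,
      σβ (pact ψ x) = fun k : Fin mβ => σω x (Fin.castLE h1 k) := by
    intro x
    funext k
    have hφω' : pact φω x = pact φβ (pact ψ x) := by rw [hφω, pact_mul]
    have hk : ((Fin.castLE (h1.trans h2) k : Fin n) : ℕ) < mβ := k.2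
    have hx := hπ (pact φβ (pact ψ x)) (Fin.castLE (h1.trans h2) k) hk
    simp only [hσβ, hσω, restr, hφω']
    rw [hx]
    congr 1
  -- choose ξ maximizing σω (ξ • xr) lexicographically
  haveI : Finite Γ := inferInstance
  obtain ⟨ξ0, hξ0⟩ := Finite.exists_max
    (fun γ : Γ => toLex (σω (pact (γ : Equiv.Perm (Fin n)) xr)))
  set ξ : Equiv.Perm (Fin n) := (ξ0 : Equiv.Perm (Fin n)) with hξdef
  -- maximality of σω (ξ • xr) over the whole Γ-orbit of xr
  have hmaxω : ∀ γ ∈ Γ, lexGe (σω (pact ξ xr)) (σω (pact γ xr)) := by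
    intro γ hγ
    exact (lexGe_iff _ _).mpr (hξ0 ⟨γ, hγ⟩)
  have hmaxω' : ∀ γ ∈ Γ, lexGe (σω (pact ξ xr)) (σω (pact γ (pact ξ xr))) := by
    intro γ hγ
    have := hmaxω (γ * ξ) (mul_mem hγ ξ0.2)
    rwa [pact_mul] at this
  -- σβ (xr) = σβ (ψ • ξ • xr)
  have hβeq : σβ xr = σβ (pact (ψ * ξ) xr) := by
    have hA : lexGe (σβ xr) (σβ (pact (ψ * ξ) xr)) := hmax (ψ * ξ) (mul_mem hψ ξ0.2)
    have hB : lexGe (σβ (pact (ψ * ξ) xr)) (σβ xr) := by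
      have h₄ := hmaxω ψ⁻¹ (inv_mem hψ)
      have h₅ := lexGe_prefix h1 h₄
      rw [← hpre (pact ξ xr), ← hpre (pact ψ⁻¹ xr)] at h₅
      have e1 : pact ψ (pact ξ xr) = pact (ψ * ξ) xr := (pact_mul ψ ξ xr).symm
      have e2 : pact ψ (pact ψ⁻¹ xr) = xr := by
        rw [← pact_mul, mul_inv_cancel, pact_one]
      rw [e1, e2] at h₅
      exact h₅
    exact lexGe_antisymm hA hB
  -- hence ψ • ξ • xr ∈ Fβ, so ξ • xr ∈ Fβ
  have hmemβ' : pact (ψ * ξ) xr ∈ Fβ :=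
    hC4β xr hxr (ψ * ξ) (mul_mem hψ ξ0.2) hβeq
  have hmemβ : pact ξ xr ∈ Fβ := by
    rw [pact_mul] at hmemβ'
    rw [← hψF] at hmemβ'
    obtain ⟨y, hy, hyeq⟩ := hmemβ'
    rwa [pact_inj ψ hyeq] at hy
  -- ξ • xr lies in some child
  have : pact ξ xr ∈ ⋃ ω : C, Fω ω := by rw [hunion]; exact hmemβ
  obtain ⟨ω, hω⟩ := Set.mem_iUnion.mp this
  -- uniqueness argument
  have huniq : ∀ ω₁ ω₂ : C, ∀ ξ₁ ∈ Γ, ∀ ξ₂ ∈ Γ,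
      pact ξ₁ xr ∈ Fω ω₁ → pact ξ₂ xr ∈ Fω ω₂ →
      (∀ γ ∈ Γ, lexGe (σω (pact ξ₁ xr)) (σω (pact γ (pact ξ₁ xr)))) →
      (∀ γ ∈ Γ, lexGe (σω (pact ξ₂ xr)) (σω (pact γ (pact ξ₂ xr)))) →
      ω₁ = ω₂ := by
    intro ω₁ ω₂ ξ₁ hξ₁ ξ₂ hξ₂ hm₁ hm₂ hmx₁ hmx₂
    have e21 : pact (ξ₂ * ξ₁⁻¹) (pact ξ₁ xr) = pact ξ₂ xr := by
      rw [← pact_mul, inv_mul_cancel_right]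
    have e12 : pact (ξ₁ * ξ₂⁻¹) (pact ξ₂ xr) = pact ξ₁ xr := by
      rw [← pact_mul, inv_mul_cancel_right]
    have hA := hmx₁ (ξ₂ * ξ₁⁻¹) (mul_mem hξ₂ (inv_mem hξ₁))
    rw [e21] at hA
    have hB := hmx₂ (ξ₁ * ξ₂⁻¹) (mul_mem hξ₁ (inv_mem hξ₂))
    rw [e12] at hB
    have heq : σω (pact ξ₁ xr) = σω (pact ξ₂ xr) := lexGe_antisymm hA hB
    have : pact (ξ₂ * ξ₁⁻¹) (pact ξ₁ xr) ∈ Fω ω₁ := by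
      apply hC4ω ω₁ (pact ξ₁ xr) hm₁ (ξ₂ * ξ₁⁻¹) (mul_mem hξ₂ (inv_mem hξ₁))
      rw [e21]; exact heq
    rw [e21] at this
    by_contra hne
    exact Set.disjoint_left.mp (hdisj ω₁ ω₂ hne) this hm₂
  refine ⟨ω, ⟨ξ, ξ0.2, hω, hmaxω'⟩, ?_⟩
  rintro ω' ⟨ξ₂, hξ₂, hm₂, hmx₂⟩
  exact huniq ω' ω ξ₂ hξ₂ ξ ξ0.2 hm₂ hω hmx₂ hmaxω'
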